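/- The max-min SINR power allocation problem with interference admits an equal-SINR optimal solution. Precisely: let N ≥ 1, and for each n define the SINR γ_n(p) = a_n p_n / (Σ_{i≠n} b_{n,i} p_i + σ²), where a_n > 0, b_{n,i} ≥ 0 for all i ≠ n, and σ² > 0. Then there exists p* in the power simplex Δ such that min_n γ_n(p*) = sup_{p ∈ Δ} min_n γ_n(p) and γ_1(p*) = γ_2(p*) = ⋯ = γ_N(p*). -/

import Mathlib

/-- The max-min SINR power allocation problem with interference admits an
equal-SINR optimal solution. -/
theorem stmt_1 (N : ℕ) (hN : 1 ≤ N)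
    (a : Fin N → ℝ) (b : Fin N → Fin N → ℝ) (σsq : ℝ)
    (ha : ∀ n, 0 < a n) (hb : ∀ n i, i ≠ n → 0 ≤ b n i) (hσ : 0 < σsq)
    (γ : (Fin N → ℝ) → Fin N → ℝ)
    (hγ : ∀ p n, γ p n = a n * p n / ((∑ i ∈ Finset.univ.erase n, b n i * p i) + σsq))
    (Δ : Set (Fin N → ℝ))
    (hΔ : Δ = {p : Fin N → ℝ | (∀ n, 0 ≤ p n) ∧ ∑ n, p n ≤ 1}) :
    ∃ pstar ∈ Δ,
      ((⨅ n, γ pstar n) = ⨆ p ∈ Δ, ⨅ n, γ p n) ∧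
      ∀ n m, γ pstar n = γ pstar m := by
  haveI : Nonempty (Fin N) := ⟨⟨0, hN⟩⟩
  subst hΔ
  set Δ : Set (Fin N → ℝ) := {p : Fin N → ℝ | (∀ n, 0 ≤ p n) ∧ ∑ n, p n ≤ 1} with hΔ
  -- denominator
  set D : (Fin N → ℝ) → Fin N → ℝ :=
    fun p n => (∑ i ∈ Finset.univ.erase n, b n i * p i) + σsq with hD
  have hDpos : ∀ p : Fin N → ℝ, (∀ n, 0 ≤ p n) → ∀ n, 0 < D p n := by
    intro p hp n
    have hs : 0 ≤ ∑ i ∈ Finset.univ.erase n, b n i * p i :=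
      Finset.sum_nonneg fun i hi =>
        mul_nonneg (hb n i (Finset.ne_of_mem_erase hi)) (hp i)
    have : D p n = (∑ i ∈ Finset.univ.erase n, b n i * p i) + σsq := rfl
    linarith [this]
  have hγD : ∀ p n, γ p n = a n * p n / D p n := fun p n => hγ p n
  have hγ0 : ∀ p ∈ Δ, ∀ n, 0 ≤ γ p n := by
    intro p hp n
    rw [hγD]
    exact div_nonneg (mul_nonneg (ha n).le (hp.1 n)) (hDpos p hp.1 n).le
  -- compactness of Δ
  have hΔsub : Δ ⊆ Set.univ.pi fun _ : Fin N => Set.Icc (0 : ℝ) 1 := by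
    intro p hp n _
    refine ⟨hp.1 n, ?_⟩
    calc p n ≤ ∑ i, p i := Finset.single_le_sum (fun i _ => hp.1 i) (Finset.mem_univ n)
    _ ≤ 1 := hp.2
  have hclosed : IsClosed Δ := by
    have h1 : IsClosed {p : Fin N → ℝ | ∀ n, 0 ≤ p n} := by
      have : {p : Fin N → ℝ | ∀ n, 0 ≤ p n} = ⋂ n, {p : Fin N → ℝ | 0 ≤ p n} := by
        ext p; simp
      rw [this]
      exact isClosed_iInter fun n => isClosed_le continuous_const (continuous_apply n)
    have h2 : IsClosed {p : Fin N → ℝ | ∑ n, p n ≤ 1} :=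
      isClosed_le (continuous_finset_sum _ fun i _ => continuous_apply i) continuous_const
    have : Δ = {p : Fin N → ℝ | ∀ n, 0 ≤ p n} ∩ {p : Fin N → ℝ | ∑ n, p n ≤ 1} := rfl
    rw [this]
    exact h1.inter h2
  have hcompact : IsCompact Δ :=
    (isCompact_univ_pi fun _ => isCompact_Icc).of_isClosed_subset hclosed hΔsub
  -- continuity of each SINR on Δ
  have hγc : ∀ n, ContinuousOn (fun p => γ p n) Δ := by
    intro n
    have heq : (fun p : Fin N → ℝ => γ p n) = fun p => a n * p n / D p n :=
      funext fun p => hγD p n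
    rw [heq]
    apply ContinuousOn.div
    · exact (continuous_const.mul (continuous_apply n)).continuousOn
    · exact ((continuous_finset_sum _ fun i _ =>
        continuous_const.mul (continuous_apply i)).add continuous_const).continuousOn
    · intro p hp; exact (hDpos p hp.1 n).ne'
  -- the min-SINR function
  set g : (Fin N → ℝ) → ℝ :=
    fun p => Finset.univ.inf' Finset.univ_nonempty (fun n => γ p n) with hg
  have hgc : ContinuousOn g Δ :=
    ContinuousOn.finset_inf'_apply Finset.univ_nonempty fun n _ => hγc n
  have hginf : ∀ p, (⨅ n, γ p n) = g p := fun p =>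
    (Finset.inf'_univ_eq_ciInf fun n => γ p n).symm
  have h0mem : (0 : Fin N → ℝ) ∈ Δ := by
    constructor
    · intro n; exact le_refl 0
    · simp
  obtain ⟨p0, hp0, hmax⟩ := hcompact.exists_isMaxOn ⟨0, h0mem⟩ hgc
  set t : ℝ := g p0 with ht
  have ht0 : 0 ≤ t := Finset.le_inf' _ _ fun n _ => hγ0 p0 hp0 n
  have htle : ∀ n, t ≤ γ p0 n := fun n =>
    Finset.inf'_le _ (Finset.mem_univ n)
  -- iteration map
  set Φ : (Fin N → ℝ) → Fin N → ℝ := fun p n => t * D p n / a n with hΦ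
  have hΦmono : ∀ p q : Fin N → ℝ, (∀ i, p i ≤ q i) → ∀ n, Φ p n ≤ Φ q n := by
    intro p q hpq n
    have hDle : D p n ≤ D q n := by
      apply add_le_add_left
      exact Finset.sum_le_sum fun i hi =>
        mul_le_mul_of_nonneg_left (hpq i) (hb n i (Finset.ne_of_mem_erase hi))
    show t * D p n / a n ≤ t * D q n / a n
    rw [div_eq_mul_inv, div_eq_mul_inv]
    exact mul_le_mul_of_nonneg_right (mul_le_mul_of_nonneg_left hDle ht0)
      (inv_nonneg.2 (ha n).le)
  have hΦnonneg : ∀ p : Fin N → ℝ, (∀ n, 0 ≤ p n) → ∀ n, 0 ≤ Φ p n := by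
    intro p hp n
    exact div_nonneg (mul_nonneg ht0 (hDpos p hp n).le) (ha n).le
  have hcontract : ∀ p : Fin N → ℝ, (∀ n, 0 ≤ p n) → (∀ n, t ≤ γ p n) →
      ∀ n, Φ p n ≤ p n := by
    intro p hp hγp n
    have hDp := hDpos p hp n
    have h1 : t * D p n ≤ a n * p n := by
      have := hγp n
      rw [hγD] at this
      calc t * D p n ≤ (a n * p n / D p n) * D p n :=
            mul_le_mul_of_nonneg_right this hDp.le
        _ = a n * p n := by field_simp
    rw [hΦ, div_le_iff₀ (ha n)]
    linarith [h1]
  -- the iteration sequence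
  set q : ℕ → Fin N → ℝ := fun k => Φ^[k] p0 with hq
  have hq0 : q 0 = p0 := rfl
  have hqsucc : ∀ k, q (k + 1) = Φ (q k) := fun k =>
    Function.iterate_succ_apply' Φ k p0
  have hqnonneg : ∀ k n, 0 ≤ q k n := by
    intro k
    induction k with
    | zero => exact hp0.1
    | succ k ih => rw [hqsucc]; exact hΦnonneg (q k) ih
  have hqstep : ∀ k n, q (k + 1) n ≤ q k n := by
    intro k
    induction k with
    | zero =>
      intro n
      rw [hqsucc, hq0]
      exact hcontract p0 hp0.1 htle n
    | succ k ih =>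
      simp only [hqsucc] at ih ⊢
      intro n
      exact hΦmono _ _ ih n
  have hanti : ∀ n, Antitone fun k => q k n := fun n =>
    antitone_nat_of_succ_le fun k => hqstep k n
  have hbdd : ∀ n, BddBelow (Set.range fun k => q k n) := fun n =>
    ⟨0, by rintro x ⟨k, rfl⟩; exact hqnonneg k n⟩
  set pinf : Fin N → ℝ := fun n => ⨅ k, q k n with hpinf
  have hlim : Filter.Tendsto q Filter.atTop (nhds pinf) := by
    rw [tendsto_pi_nhds]
    intro n
    exact tendsto_atTop_ciInf (hanti n) (hbdd n)
  have hΦcont : Continuous Φ := by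
    apply continuous_pi
    intro n
    exact (continuous_const.mul (((continuous_finset_sum _ fun i _ =>
      continuous_const.mul (continuous_apply i)).add continuous_const))).div_const _
  have hfix : pinf = Φ pinf := by
    have h1 : Filter.Tendsto (fun k => q (k + 1)) Filter.atTop (nhds pinf) :=
      hlim.comp (Filter.tendsto_add_atTop_nat 1)
    have h2 : Filter.Tendsto (fun k => Φ (q k)) Filter.atTop (nhds (Φ pinf)) :=
      (hΦcont.tendsto _).comp hlim
    have heq : (fun k => q (k + 1)) = fun k => Φ (q k) := funext hqsucc
    rw [heq] at h1
    exact tendsto_nhds_unique h1 h2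
  have hpinf_nonneg : ∀ n, 0 ≤ pinf n := fun n =>
    le_ciInf fun k => hqnonneg k n
  have hpinf_le : ∀ n, pinf n ≤ p0 n := fun n => by
    have := ciInf_le (hbdd n) 0
    rwa [hq0] at this
  have hpinf_mem : pinf ∈ Δ := by
    refine ⟨hpinf_nonneg, ?_⟩
    calc ∑ n, pinf n ≤ ∑ n, p0 n := Finset.sum_le_sum fun n _ => hpinf_le n
      _ ≤ 1 := hp0.2
  have hγeq : ∀ n, γ pinf n = t := by
    intro n
    have hDp := hDpos pinf hpinf_nonneg n
    have h1 : pinf n = t * D pinf n / a n := by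
      conv_lhs => rw [hfix]
    rw [hγD, h1]
    have h2 : a n * (t * D pinf n / a n) = t * D pinf n := by
      field_simp
      exact mul_div_cancel_left₀ _ (ha n).ne'
    rw [h2, mul_div_cancel_right₀ _ hDp.ne']
  refine ⟨pinf, hpinf_mem, ?_, fun n m => by rw [hγeq n, hγeq m]⟩
  have hinfconst : (⨅ n, γ pinf n) = t := by
    have : (fun n => γ pinf n) = fun _ => t := funext hγeq
    rw [this, ciInf_const]
  rw [hinfconst]
  -- now show t = ⨆ p ∈ Δ, ⨅ n, γ p n
  have hle : ∀ p ∈ Δ, (⨅ n, γ p n) ≤ t := by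
    intro p hp
    rw [hginf]
    exact hmax hp
  apply le_antisymm
  · -- t ≤ sup
    have hFbdd : BddAbove (Set.range fun p => ⨆ _ : p ∈ Δ, ⨅ n, γ p n) := by
      refine ⟨t, ?_⟩
      rintro x ⟨p, rfl⟩
      exact Real.iSup_le (fun hp => hle p hp) ht0
    calc t = ⨅ n, γ pinf n := hinfconst.symm
      _ = ⨆ _ : pinf ∈ Δ, ⨅ n, γ pinf n := (ciSup_pos (f := fun _ : pinf ∈ Δ => ⨅ n, γ pinf n) hpinf_mem).symm
      _ ≤ ⨆ p, ⨆ _ : p ∈ Δ, ⨅ n, γ p n := le_ciSup hFbdd pinf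
  · exact Real.iSup_le (fun p => Real.iSup_le (fun hp => hle p hp) ht0) ht0
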